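/- With the notation of the previous statement, for 1 ≤ p ≤ n: Tr(E⁰_k·π_p) = ((p-1)!(n-p)!)/(2^k (n-k-1)!) · Σ_{j=max(0,k+p-n)}^{min(k,p-1)} C(n-k-1, p-j-1)·C(k,j)²·(-1)^{j+k}. -/

import Mathlib

/-- The matrix of `-√2·X = z ∂/∂z̄` in the basis `w_p = z^{p-1} z̄^{n-p}` (`p = 1,…,n`,
here indexed by `Fin n` with `p = i+1`): `w_p ↦ (n-p)·w_{p+1}`. -/
def Emat (n : ℕ) : Matrix (Fin n) (Fin n) ℂ :=
  fun i j => if (i : ℕ) = (j : ℕ) + 1 then ((n - 1 - (j : ℕ) : ℕ) : ℂ) else 0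

/-- The matrix of `√2·Y = z̄ ∂/∂z` in the same basis: `w_p ↦ (p-1)·w_{p-1}`. -/
def Fmat (n : ℕ) : Matrix (Fin n) (Fin n) ℂ :=
  fun i j => if (i : ℕ) + 1 = (j : ℕ) then ((j : ℕ) : ℂ) else 0

/-- `E⁰_k = (-√2 X)^k`. -/
def E0 (n k : ℕ) : Matrix (Fin n) (Fin n) ℂ := (Emat n) ^ k

/-- `F⁰_k = -(√2 Y)^k`. -/
def F0 (n k : ℕ) : Matrix (Fin n) (Fin n) ℂ := -((Fmat n) ^ k)

/-- The coordinates (in the basis `w_{r+s+1} = z^{r+s} z̄^{n-1-(r+s)}`) of the real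
polynomial `u_p = x^{p-1} y^{n-p}` (with `z = x+iy`), `p = 1,…,n`, indexed by `Fin n`
with `p = (p:ℕ)+1`:
`u_p = i^{n-p}/2^{n-1} ∑_{r=0}^{p-1} ∑_{s=0}^{n-p} (-1)^s C(p-1,r) C(n-p,s) w_{r+s+1}`. -/
noncomputable def uvec (n : ℕ) (p : Fin n) : Fin n → ℂ := fun j =>
  Complex.I ^ (n - 1 - (p : ℕ)) / 2 ^ (n - 1) *
    ∑ r ∈ Finset.range ((p : ℕ) + 1), ∑ s ∈ Finset.range (n - (p : ℕ)),
      if r + s = (j : ℕ) then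
        ((-1 : ℂ)) ^ s * (((p : ℕ).choose r : ℕ) : ℂ) * (((n - 1 - (p : ℕ)).choose s : ℕ) : ℂ)
      else 0

open MvPolynomial Finset

namespace Stmt10Aux

noncomputable section

local notation "R2" => MvPolynomial (Fin 2) ℂ

def zP : R2 := X 0 + C Complex.I * X 1
def wP : R2 := X 0 - C Complex.I * X 1
def mono (a b : ℕ) : R2 := X 0 ^ a * X 1 ^ b

lemma mono_eq (a b : ℕ) :
    mono a b = monomial (Finsupp.single 0 a + Finsupp.single 1 b) 1 := by
  rw [mono, X_pow_eq_monomial, X_pow_eq_monomial, monomial_mul, mul_one]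

lemma single_add_eq_iff (A B a b : ℕ) :
    Finsupp.single (0 : Fin 2) a + Finsupp.single 1 b =
      Finsupp.single 0 A + Finsupp.single 1 B ↔ a = A ∧ b = B := by
  constructor
  · intro h
    have h0 := DFunLike.congr_fun h 0
    have h1 := DFunLike.congr_fun h 1
    simp [Finsupp.single_apply] at h0 h1
    exact ⟨h0, h1⟩
  · rintro ⟨rfl, rfl⟩; rfl

lemma coeff_mono (A B a b : ℕ) :
    coeff (Finsupp.single 0 A + Finsupp.single 1 B) (mono a b)
      = if a = A ∧ b = B then 1 else 0 := by
  rw [mono_eq, coeff_monomial]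
  simp only [single_add_eq_iff]

def d0 : Module.End ℂ R2 := (pderiv 0).toLinearMap
def d1 : Module.End ℂ R2 := (pderiv 1).toLinearMap

lemma d0_mono (a b : ℕ) : d0 (mono a b) = (a : ℂ) • mono (a - 1) b := by
  have h : pderiv (0 : Fin 2) (X 0 ^ a * X 1 ^ b : R2) = (a:ℂ) • (X 0 ^ (a-1) * X 1 ^ b) := by
    rw [pderiv_mul, pderiv_pow, pderiv_pow, pderiv_X_self, pderiv_X_of_ne (by decide)]
    rw [smul_eq_C_mul, map_natCast]
    push_cast
    ring
  exact h

lemma d1_mono (a b : ℕ) : d1 (mono a b) = (b : ℂ) • mono a (b - 1) := by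
  have h : pderiv (1 : Fin 2) (X 0 ^ a * X 1 ^ b : R2) = (b:ℂ) • (X 0 ^ a * X 1 ^ (b-1)) := by
    rw [pderiv_mul, pderiv_pow, pderiv_pow, pderiv_X_self, pderiv_X_of_ne (by decide)]
    rw [smul_eq_C_mul, map_natCast]
    push_cast
    ring
  exact h

lemma d0_pow_mono (m a b : ℕ) :
    (d0 ^ m) (mono a b) = (a.descFactorial m : ℂ) • mono (a - m) b := by
  induction m with
  | zero => simp
  | succ m ih =>
      rw [pow_succ', Module.End.mul_apply, ih, map_smul, d0_mono, smul_smul,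
        Nat.descFactorial_succ]
      push_cast
      rw [mul_comm, Nat.sub_sub]

lemma d1_pow_mono (m a b : ℕ) :
    (d1 ^ m) (mono a b) = (b.descFactorial m : ℂ) • mono a (b - m) := by
  induction m with
  | zero => simp
  | succ m ih =>
      rw [pow_succ', Module.End.mul_apply, ih, map_smul, d1_mono, smul_smul,
        Nat.descFactorial_succ]
      push_cast
      rw [mul_comm, Nat.sub_sub]

lemma dcomm : Commute d0 d1 := by
  apply LinearMap.ext
  intro f
  simp only [Module.End.mul_apply, d0, d1, Derivation.coeFn_coe]
  induction f using MvPolynomial.induction_on with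
  | C a => simp
  | add f g hf hg => simp [hf, hg]
  | mul_X f i hf =>
      fin_cases i <;>
      simp [pderiv_mul, pderiv_X_self, pderiv_X_of_ne, hf, map_add, pderiv_mul] <;> ring

def DZ : Module.End ℂ R2 := d0 + Complex.I • d1

lemma dcomm' : Commute d0 (Complex.I • d1) := (dcomm).smul_right _

def mulZ : Module.End ℂ R2 := LinearMap.mulLeft ℂ zP

def Eop : Module.End ℂ R2 := mulZ * ((2⁻¹ : ℂ) • DZ)

lemma DZ_z_mul (f : R2) : DZ (zP * f) = zP * DZ f := by
  simp only [DZ, zP, LinearMap.add_apply, LinearMap.smul_apply, d0, d1, Derivation.coeFn_coe,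
    pderiv_mul, pderiv_X_self, pderiv_X_of_ne (show (1:Fin 2) ≠ 0 by decide),
    pderiv_X_of_ne (show (0:Fin 2) ≠ 1 by decide), map_add, pderiv_C_mul,
    smul_eq_C_mul, pderiv_C]
  have hI : (C Complex.I : R2) ^ 2 = -1 := by
    rw [← map_pow, Complex.I_sq, map_neg, map_one]
  ring_nf
  rw [hI]
  ring

lemma commZ : Commute mulZ ((2⁻¹ : ℂ) • DZ) := by
  apply LinearMap.ext
  intro f
  simp only [Module.End.mul_apply, mulZ, LinearMap.mulLeft_apply, LinearMap.smul_apply,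
    DZ_z_mul, mul_smul_comm]

lemma Eop_pow (k : ℕ) :
    Eop ^ k = LinearMap.mulLeft ℂ (zP ^ k) * ((2⁻¹ : ℂ) ^ k • DZ ^ k) := by
  rw [Eop, commZ.mul_pow, mulZ, LinearMap.pow_mulLeft, smul_pow]

lemma DZ_zpow_mul (a : ℕ) (f : R2) : DZ (zP ^ a * f) = zP ^ a * DZ f := by
  induction a with
  | zero => simp
  | succ a ih => rw [pow_succ, mul_comm (zP ^ a) zP, mul_assoc, DZ_z_mul, ih, mul_assoc]

lemma DZ_w_pow (b : ℕ) : DZ (wP ^ b) = ((2 * b : ℂ)) • wP ^ (b - 1) := by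
  have h0 : pderiv (0 : Fin 2) wP = 1 := by
    simp [wP, pderiv_X_self, pderiv_C_mul, pderiv_X_of_ne (show (1:Fin 2) ≠ 0 by decide)]
  have h1 : pderiv (1 : Fin 2) wP = - C Complex.I := by
    simp [wP, pderiv_C_mul, pderiv_X_self, pderiv_X_of_ne (show (0:Fin 2) ≠ 1 by decide)]
  have hI : (C Complex.I : R2) ^ 2 = -1 := by
    rw [← map_pow, Complex.I_sq, map_neg, map_one]
  simp only [DZ, LinearMap.add_apply, LinearMap.smul_apply, d0, d1, Derivation.coeFn_coe,
    pderiv_pow, h0, h1, smul_eq_C_mul, map_natCast]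
  ring_nf
  rw [hI, map_mul, map_natCast, map_ofNat]
  ring

lemma Eop_zw (a b : ℕ) : Eop (zP ^ a * wP ^ b) = (b : ℂ) • (zP ^ (a + 1) * wP ^ (b - 1)) := by
  rw [Eop, Module.End.mul_apply, LinearMap.smul_apply, DZ_zpow_mul, DZ_w_pow]
  rw [mulZ, LinearMap.mulLeft_apply]
  simp only [mul_smul_comm, smul_smul]
  rw [show (2⁻¹ : ℂ) * (2 * b) = b by ring, pow_succ, smul_eq_C_mul, smul_eq_C_mul]
  ring

def Phi (n : ℕ) : (Fin n → ℂ) →ₗ[ℂ] R2 where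
  toFun v := ∑ j : Fin n, v j • (zP ^ (j : ℕ) * wP ^ (n - 1 - (j : ℕ)))
  map_add' v w := by simp [add_smul, Finset.sum_add_distrib]
  map_smul' c v := by simp [Finset.smul_sum, smul_smul]

lemma Phi_apply (n : ℕ) (v : Fin n → ℂ) :
    Phi n v = ∑ j : Fin n, v j • (zP ^ (j : ℕ) * wP ^ (n - 1 - (j : ℕ))) := rfl

lemma Phi_mulVec (n : ℕ) (v : Fin n → ℂ) :
    Phi n ((Emat n).mulVec v) = Eop (Phi n v) := by
  rw [Phi_apply, Phi_apply, map_sum]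
  have rhs : ∀ j : Fin n, Eop (v j • (zP ^ (j:ℕ) * wP ^ (n - 1 - (j:ℕ))))
      = (v j * (n - 1 - (j:ℕ) : ℕ)) • (zP ^ ((j:ℕ) + 1) * wP ^ (n - 1 - (j:ℕ) - 1)) := by
    intro j
    rw [map_smul, Eop_zw, smul_smul]
  simp only [rhs]
  -- LHS: expand mulVec
  have lhs : ∀ i : Fin n, (Emat n).mulVec v i
      = ∑ j : Fin n, (if (i:ℕ) = (j:ℕ) + 1 then ((n - 1 - (j:ℕ) : ℕ) : ℂ) else 0) * v j := by
    intro i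
    rw [Matrix.mulVec]
    rfl
  simp only [lhs, Finset.sum_smul, ite_mul, zero_mul, ite_smul, zero_smul]
  rw [Finset.sum_comm]
  apply Finset.sum_congr rfl
  intro j _
  by_cases hj : (j : ℕ) + 1 < n
  · rw [Finset.sum_eq_single (⟨(j:ℕ)+1, hj⟩ : Fin n)]
    · simp only [Fin.val_mk]
      rw [if_pos trivial, mul_comm, show n - 1 - ((j:ℕ) + 1) = n - 1 - (j:ℕ) - 1 from by omega]
    · intro i _ hne
      have : ¬ ((i:ℕ) = (j:ℕ) + 1) := fun hc => hne (Fin.ext hc)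
      rw [if_neg this]
    · intro h
      simp at h
  · have hj' : (j : ℕ) = n - 1 := by have := j.isLt; omega
    have hz : ((n - 1 - (j:ℕ) : ℕ) : ℂ) = 0 := by
      rw [hj', Nat.sub_self]
      norm_num
    rw [hz]
    simp only [mul_zero, zero_smul]
    apply Finset.sum_eq_zero
    intro i _
    have : ¬ ((i:ℕ) = (j:ℕ) + 1) := by have := i.isLt; omega
    rw [if_neg this]

lemma Phi_E0_mulVec (n k : ℕ) (v : Fin n → ℂ) :
    Phi n ((E0 n k).mulVec v) = (Eop ^ k) (Phi n v) := by
  induction k with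
  | zero => simp [E0, Matrix.one_mulVec]
  | succ k ih =>
      rw [E0, pow_succ', ← Matrix.mulVec_mulVec, Phi_mulVec, ← E0, ih, pow_succ',
        Module.End.mul_apply]

lemma Phi_uvec (n : ℕ) (p : Fin n) :
    Phi n (uvec n p) = mono (p : ℕ) (n - 1 - (p : ℕ)) := by
  have hPn : (p:ℕ) < n := p.isLt
  set P := (p : ℕ) with hPdef
  set q := n - 1 - P with hqdef
  have hpq : P + q = n - 1 := by omega
  have hrange : n - P = q + 1 := by omega
  have step1 : Phi n (uvec n p) = ∑ j ∈ range n,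
      ((Complex.I ^ q / 2 ^ (n-1)) * ∑ r ∈ range (P+1), ∑ s ∈ range (n - P),
        (if r + s = j then ((-1:ℂ))^s * (P.choose r : ℕ) * ((q.choose s : ℕ) : ℂ) else 0)) •
      (zP ^ j * wP ^ (n - 1 - j)) := by
    rw [Phi_apply]
    simp only [uvec]
    exact Fin.sum_univ_eq_sum_range (fun j =>
      ((Complex.I ^ q / 2 ^ (n-1)) * ∑ r ∈ range (P+1), ∑ s ∈ range (n - P),
        (if r + s = j then ((-1:ℂ))^s * (P.choose r : ℕ) * ((q.choose s : ℕ) : ℂ) else 0)) •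
      (zP ^ j * wP ^ (n - 1 - j))) n
  have step2 : (∑ j ∈ range n, (∑ r ∈ range (P+1), ∑ s ∈ range (n - P),
        (if r + s = j then ((-1:ℂ))^s * (P.choose r : ℕ) * ((q.choose s : ℕ) : ℂ) else 0)) •
      (zP ^ j * wP ^ (n - 1 - j)))
      = (zP + wP) ^ P * (-zP + wP) ^ q := by
    have swap1 : (∑ j ∈ range n, (∑ r ∈ range (P+1), ∑ s ∈ range (n - P),
          (if r + s = j then ((-1:ℂ))^s * (P.choose r : ℕ) * ((q.choose s : ℕ) : ℂ) else 0)) •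
        (zP ^ j * wP ^ (n - 1 - j)))
        = ∑ r ∈ range (P+1), ∑ s ∈ range (n - P), ∑ j ∈ range n,
          (if r + s = j then (((-1:ℂ))^s * (P.choose r : ℕ) * ((q.choose s : ℕ) : ℂ)) •
            (zP ^ j * wP ^ (n - 1 - j)) else 0) := by
      simp only [Finset.sum_smul, ite_smul, zero_smul]
      rw [Finset.sum_comm]
      exact Finset.sum_congr rfl (fun r _ => Finset.sum_comm)
    rw [swap1]
    have collapse : ∀ r ∈ range (P+1), ∀ s ∈ range (n - P),
        (∑ j ∈ range n, (if r + s = j then (((-1:ℂ))^s * (P.choose r : ℕ) * ((q.choose s : ℕ) : ℂ)) •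
            (zP ^ j * wP ^ (n - 1 - j)) else 0))
        = ((P.choose r : ℕ) : ℂ) • (zP ^ r * wP ^ (P - r)) *
          ((((-1:ℂ))^s * ((q.choose s : ℕ) : ℂ)) • (zP ^ s * wP ^ (q - s))) := by
      intro r hr s hs
      simp only [Finset.mem_range] at hr hs
      rw [Finset.sum_ite_eq (range n) (r + s)
        (fun j => (((-1:ℂ))^s * (P.choose r : ℕ) * ((q.choose s : ℕ) : ℂ)) •
          (zP ^ j * wP ^ (n - 1 - j)))]
      rw [if_pos (by simp only [Finset.mem_range]; omega)]
      rw [show n - 1 - (r + s) = (P - r) + (q - s) from by omega, pow_add, pow_add]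
      rw [smul_mul_smul_comm]
      ring_nf
    rw [Finset.sum_congr rfl (fun r hr => Finset.sum_congr rfl (fun s hs => collapse r hr s hs))]
    rw [← Finset.sum_mul_sum]
    rw [hrange]
    congr 1
    · rw [add_pow]
      apply Finset.sum_congr rfl
      intro r _
      rw [smul_eq_C_mul, map_natCast]
      ring
    · rw [add_pow]
      apply Finset.sum_congr rfl
      intro s _
      have hneg : (-zP) ^ s = C ((-1:ℂ)^s) * zP ^ s := by
        rw [map_pow, map_neg, map_one, neg_pow]
      rw [hneg, smul_eq_C_mul, map_mul, map_natCast]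
      ring
  rw [step1]
  simp only [mul_smul]
  rw [← Finset.smul_sum, step2]
  have hz : zP + wP = (2 : R2) * X 0 := by rw [zP, wP]; ring
  have hw : -zP + wP = (-2 : R2) * (C Complex.I * X 1) := by rw [zP, wP]; ring
  rw [hz, hw, mul_pow, mul_pow, mul_pow]
  rw [show ((2:R2))^P = C ((2:ℂ)^P) from by rw [map_pow, map_ofNat]]
  rw [show ((-2:R2))^q = C ((-2:ℂ)^q) from by rw [map_pow, map_neg, map_ofNat]]
  rw [show (C Complex.I : R2)^q = C (Complex.I^q) from by rw [map_pow]]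
  rw [smul_eq_C_mul]
  have key : Complex.I ^ q / 2 ^ (n-1) * ((2:ℂ)^P * ((-2:ℂ)^q * Complex.I^q)) = 1 := by
    rw [← hpq, neg_pow]
    have h1 : Complex.I^q * Complex.I^q = ((-1:ℂ))^q := by rw [← mul_pow, Complex.I_mul_I]
    have h2 : (2:ℂ)^(P+q) ≠ 0 := pow_ne_zero _ two_ne_zero
    field_simp
    rw [pow_add]
    linear_combination ((-1:ℂ))^q * 2^P * 2^q * h1 + 2^P * 2^q * (by rw [← mul_pow]; norm_num :
      ((-1:ℂ))^q * (-1)^q = 1)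
  calc C (Complex.I ^ q / 2 ^ (n-1)) * (C ((2:ℂ)^P) * X 0 ^ P * (C ((-2:ℂ)^q) * (C (Complex.I^q) * X 1 ^ q)))
      = C (Complex.I ^ q / 2 ^ (n-1) * ((2:ℂ)^P * ((-2:ℂ)^q * Complex.I^q))) * (X 0 ^ P * X 1 ^ q) := by
        rw [map_mul, map_mul, map_mul]
        ring
    _ = mono P q := by rw [key, map_one, one_mul, mono]

lemma uvec_li (n : ℕ) : LinearIndependent ℂ (uvec n) := by
  have hinj : Function.Injective (fun m : Fin n =>
      Finsupp.single (0 : Fin 2) (m : ℕ) + Finsupp.single 1 (n - 1 - (m : ℕ))) := by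
    intro a b hab
    have h0 := DFunLike.congr_fun hab 0
    simp [Finsupp.single_apply] at h0
    exact Fin.ext h0
  have h1 := ((MvPolynomial.basisMonomials (Fin 2) ℂ).linearIndependent).comp _ hinj
  apply LinearIndependent.of_comp (Phi n)
  have heq : (⇑(Phi n) ∘ uvec n) = fun m : Fin n =>
      (MvPolynomial.basisMonomials (Fin 2) ℂ)
        (Finsupp.single (0 : Fin 2) (m : ℕ) + Finsupp.single 1 (n - 1 - (m : ℕ))) := by
    funext m
    simp only [Function.comp_apply, Phi_uvec, mono_eq, coe_basisMonomials]
  rw [heq]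
  exact h1

lemma L1 (k p q j : ℕ) (hjk : j ≤ k) :
    ((p.descFactorial j : ℕ) : ℂ) * ((q.descFactorial (k - j) : ℕ) : ℂ) *
      coeff (Finsupp.single 0 p + Finsupp.single 1 q) (zP ^ k * mono (p - j) (q - (k - j)))
    = ((p.descFactorial j : ℕ) : ℂ) * ((q.descFactorial (k - j) : ℕ) : ℂ) *
      (((k.choose j : ℕ) : ℂ) * Complex.I ^ (k - j)) := by
  by_cases hc : j ≤ p ∧ k - j ≤ q
  · obtain ⟨hc1, hc2⟩ := hc
    have hterm : ∀ m, X 0 ^ m * (C Complex.I * X 1) ^ (k - m) * ((k.choose m : ℕ) : R2) *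
        mono (p - j) (q - (k - j))
        = C (Complex.I ^ (k - m) * ((k.choose m : ℕ) : ℂ)) *
          mono (m + (p - j)) ((k - m) + (q - (k - j))) := by
      intro m
      rw [mono, mono, map_mul, map_pow, map_natCast, mul_pow]
      ring
    have hcoeff : coeff (Finsupp.single 0 p + Finsupp.single 1 q)
        (zP ^ k * mono (p - j) (q - (k - j)))
        = Complex.I ^ (k - j) * ((k.choose j : ℕ) : ℂ) := by
      rw [zP, add_pow, Finset.sum_mul]
      rw [Finset.sum_congr rfl (fun m _ => hterm m)]
      rw [coeff_sum]
      rw [Finset.sum_congr rfl (fun m _ => by rw [coeff_C_mul, coeff_mono])]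
      rw [Finset.sum_eq_single j]
      · rw [if_pos ⟨by omega, by omega⟩, mul_one]
      · intro m hm hne
        simp only [Finset.mem_range] at hm
        rw [if_neg, mul_zero]
        rintro ⟨h1, _⟩
        omega
      · intro h
        simp only [Finset.mem_range] at h
        omega
    rw [hcoeff]
    ring
  · rw [not_and_or] at hc
    rcases hc with hc | hc
    · rw [Nat.descFactorial_eq_zero_iff_lt.2 (by omega)]
      push_cast
      ring
    · rw [Nat.descFactorial_eq_zero_iff_lt.2 (show q < k - j by omega)]
      push_cast
      ring

lemma DZ_pow_mono (k p q : ℕ) : (DZ ^ k) (mono p q) = ∑ j ∈ range (k+1),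
    (((k.choose j : ℕ) : ℂ) * Complex.I ^ (k - j) * ((p.descFactorial j : ℕ) : ℂ) *
      ((q.descFactorial (k - j) : ℕ) : ℂ)) • mono (p - j) (q - (k - j)) := by
  rw [DZ, dcomm'.add_pow, LinearMap.sum_apply]
  apply Finset.sum_congr rfl
  intro j _
  rw [Module.End.mul_apply, Module.End.mul_apply, Module.End.natCast_apply]
  rw [← Nat.cast_smul_eq_nsmul ℂ (k.choose j) (mono p q)]
  rw [map_smul, smul_pow, LinearMap.smul_apply, d1_pow_mono]
  rw [map_smul, map_smul, map_smul, d0_pow_mono]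
  rw [smul_smul, smul_smul, smul_smul]
  congr 1
  ring

lemma coeff_Eop (k p q : ℕ) :
    coeff (Finsupp.single 0 p + Finsupp.single 1 q) ((Eop ^ k) (mono p q))
    = (2⁻¹ : ℂ)^k * ∑ j ∈ range (k+1), (-1:ℂ)^(k-j) * ((k.choose j : ℕ) : ℂ)^2 *
        ((p.descFactorial j : ℕ) : ℂ) * ((q.descFactorial (k - j) : ℕ) : ℂ) := by
  rw [Eop_pow, Module.End.mul_apply, LinearMap.smul_apply, LinearMap.mulLeft_apply]
  rw [DZ_pow_mono, Finset.smul_sum, Finset.mul_sum, coeff_sum, Finset.mul_sum]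
  apply Finset.sum_congr rfl
  intro j hj
  simp only [Finset.mem_range] at hj
  have hjk : j ≤ k := by omega
  rw [smul_smul, mul_smul_comm, coeff_smul]
  have hL1 := L1 k p q j hjk
  have hI2 : Complex.I ^ (k - j) * Complex.I ^ (k - j) = (-1:ℂ)^(k-j) := by
    rw [← mul_pow, Complex.I_mul_I]
  set D1 := ((p.descFactorial j : ℕ) : ℂ)
  set D2 := ((q.descFactorial (k - j) : ℕ) : ℂ)
  set Ck := ((k.choose j : ℕ) : ℂ)
  set co := coeff (Finsupp.single 0 p + Finsupp.single 1 q)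
    (zP ^ k * mono (p - j) (q - (k - j)))
  rw [smul_eq_mul]
  linear_combination ((2⁻¹:ℂ)^k * Ck * Complex.I^(k-j)) * hL1 +
    ((2⁻¹:ℂ)^k * Ck^2 * D1 * D2) * hI2

lemma key2 (k P q : ℕ) (hk : k ≤ P + q) :
    (2⁻¹ : ℂ)^k * ∑ j ∈ range (k+1), (-1:ℂ)^(k-j) * ((k.choose j : ℕ) : ℂ)^2 *
        ((P.descFactorial j : ℕ) : ℂ) * ((q.descFactorial (k - j) : ℕ) : ℂ)
    = ((P.factorial : ℂ) * (q.factorial : ℂ)) / (2^k * ((P + q - k).factorial : ℂ)) *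
      ∑ j ∈ Finset.Icc (k - q) (min k P),
        (((P + q - k).choose (P - j) : ℕ) : ℂ) * ((k.choose j : ℕ) : ℂ)^2 * (-1:ℂ)^(j+k) := by
  have hsub : Finset.Icc (k - q) (min k P) ⊆ range (k+1) := by
    intro x hx
    simp only [Finset.mem_Icc, Finset.mem_range] at hx ⊢
    omega
  have hz : ∀ x ∈ range (k+1), x ∉ Finset.Icc (k - q) (min k P) →
      (-1:ℂ)^(k-x) * ((k.choose x : ℕ) : ℂ)^2 *
        ((P.descFactorial x : ℕ) : ℂ) * ((q.descFactorial (k - x) : ℕ) : ℂ) = 0 := by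
    intro x hx hnx
    simp only [Finset.mem_Icc, Finset.mem_range, not_and, not_le] at hx hnx
    have : P < x ∨ q < k - x := by omega
    rcases this with h | h
    · rw [Nat.descFactorial_eq_zero_iff_lt.2 h]
      push_cast
      ring
    · rw [Nat.descFactorial_eq_zero_iff_lt.2 h]
      push_cast
      ring
  rw [← Finset.sum_subset hsub hz, Finset.mul_sum, Finset.mul_sum]
  apply Finset.sum_congr rfl
  intro j hj
  simp only [Finset.mem_Icc, le_min_iff] at hj
  have hj1 : k - q ≤ j := hj.1
  have hj2 : j ≤ k := hj.2.1
  have hj3 : j ≤ P := hj.2.2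
  have hnat : P.descFactorial j * q.descFactorial (k-j) * (P+q-k).factorial
      = P.factorial * q.factorial * (P+q-k).choose (P-j) := by
    have h1 : (P - j).factorial * P.descFactorial j = P.factorial :=
      Nat.factorial_mul_descFactorial (by omega)
    have h2 : (q - (k-j)).factorial * q.descFactorial (k-j) = q.factorial :=
      Nat.factorial_mul_descFactorial (by omega)
    have h3 : (P+q-k).choose (P-j) * (P-j).factorial * (q - (k-j)).factorial
        = (P+q-k).factorial := by
      have h := Nat.choose_mul_factorial_mul_factorial (show P - j ≤ P+q-k by omega)
      rwa [show P+q-k - (P-j) = q - (k-j) from by omega] at h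
    rw [← h1, ← h2, ← h3]
    ring
  have hnatC := congrArg (fun m : ℕ => (m : ℂ)) hnat
  push_cast at hnatC
  have hfac : ((P+q-k).factorial : ℂ) ≠ 0 := Nat.cast_ne_zero.2 (Nat.factorial_ne_zero _)
  have h2k : (2:ℂ)^k ≠ 0 := pow_ne_zero _ two_ne_zero
  have hsign : (-1:ℂ)^(k-j) = (-1:ℂ)^(j+k) := by
    rw [show j + k = (k-j) + 2*j from by omega, pow_add, pow_mul]
    norm_num
  rw [hsign]
  field_simp
  have h12 : (1/2:ℂ)^k * 2^k = 1 := by rw [← mul_pow]; norm_num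
  linear_combination ((k.choose j : ℕ) : ℂ)^2 * hnatC + ((k.choose j : ℕ) : ℂ)^2 *
    ((P.descFactorial j : ℕ) : ℂ) * ((q.descFactorial (k - j) : ℕ) : ℂ) *
    ((P+q-k).factorial : ℂ) * h12

end
end Stmt10Aux


open Stmt10Aux

/-- If `π_p` is the projection onto the line spanned by `u_p` along the span of the other
`u_q`'s (here `p : Fin n` corresponds to the 1-based index `p+1`), then
`Tr(E⁰_k·π_p) = ((p-1)!(n-p)!)/(2^k (n-k-1)!) ·
  ∑_{j=max(0,k+p-n)}^{min(k,p-1)} C(n-k-1, p-j-1)·C(k,j)²·(-1)^{j+k}`. -/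
theorem stmt_10 (n k : ℕ) (hk : k ≤ n - 1) (p : Fin n)
    (P : Matrix (Fin n) (Fin n) ℂ)
    (hP1 : P.mulVec (uvec n p) = uvec n p)
    (hP0 : ∀ q : Fin n, q ≠ p → P.mulVec (uvec n q) = 0) :
    Matrix.trace (E0 n k * P)
      = (((p : ℕ).factorial : ℂ) * ((n - 1 - (p : ℕ)).factorial : ℂ)) /
          (2 ^ k * ((n - k - 1).factorial : ℂ)) *
        ∑ j ∈ Finset.Icc (k + ((p : ℕ) + 1) - n) (min k (p : ℕ)),
          ((n - k - 1).choose ((p : ℕ) - j) : ℂ) * ((k.choose j : ℕ) : ℂ) ^ 2 *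
            (-1 : ℂ) ^ (j + k) := by
  classical
  haveI : Nonempty (Fin n) := ⟨p⟩
  have hPn : (p : ℕ) < n := p.isLt
  set Pv := (p : ℕ) with hPv
  set q := n - 1 - Pv with hq
  have hpq : Pv + q = n - 1 := by omega
  -- basis from uvec
  let B : Module.Basis (Fin n) ℂ (Fin n → ℂ) :=
    basisOfLinearIndependentOfCardEqFinrank (uvec_li n)
      (by simp [Module.finrank_fintype_fun_eq_card])
  have hB : ⇑B = uvec n := coe_basisOfLinearIndependentOfCardEqFinrank _ _
  -- trace reduction
  have htr : Matrix.trace (E0 n k * P) = B.repr ((E0 n k).mulVec (uvec n p)) p := by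
    have h1 : Matrix.trace (E0 n k * P)
        = LinearMap.trace ℂ _ (Matrix.toLin' (E0 n k * P)) := by
      rw [LinearMap.trace_eq_matrix_trace ℂ (Pi.basisFun ℂ (Fin n)),
        LinearMap.toMatrix_eq_toMatrix', LinearMap.toMatrix'_toLin']
    rw [h1, LinearMap.trace_eq_matrix_trace ℂ B, Matrix.trace]
    have h2 : ∀ r : Fin n,
        Matrix.diag (LinearMap.toMatrix B B (Matrix.toLin' (E0 n k * P))) r
        = B.repr ((E0 n k).mulVec (P.mulVec (uvec n r))) r := by
      intro r
      rw [Matrix.diag, LinearMap.toMatrix_apply, Matrix.toLin'_apply, ← Matrix.mulVec_mulVec]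
      rw [show B r = uvec n r from congrFun hB r]
    rw [Finset.sum_congr rfl (fun r _ => h2 r)]
    rw [Finset.sum_eq_single p]
    · rw [hP1]
    · intro r _ hr
      rw [hP0 r hr, Matrix.mulVec_zero]
      simp
    · intro h
      simp at h
  -- repr to coeff
  have hrepr : ∀ v : Fin n → ℂ, B.repr v p
      = MvPolynomial.coeff (Finsupp.single 0 Pv + Finsupp.single 1 q) (Phi n v) := by
    intro v
    have hv : Phi n v = ∑ m : Fin n, B.repr v m • mono (m : ℕ) (n - 1 - (m : ℕ)) := by
      conv_lhs => rw [← B.sum_repr v]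
      rw [map_sum]
      apply Finset.sum_congr rfl
      intro m _
      rw [map_smul, show B m = uvec n m from congrFun hB m, Phi_uvec]
    rw [hv, MvPolynomial.coeff_sum]
    rw [Finset.sum_congr rfl (fun m _ => by
      rw [MvPolynomial.coeff_smul, coeff_mono, smul_eq_mul])]
    rw [Finset.sum_eq_single p]
    · rw [if_pos ⟨rfl, rfl⟩, mul_one]
    · intro m _ hm
      rw [if_neg, mul_zero]
      rintro ⟨h1, -⟩
      exact hm (Fin.ext h1)
    · intro h
      simp at h
  rw [htr, hrepr, Phi_E0_mulVec, Phi_uvec]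
  rw [show n - 1 - Pv = q from rfl]
  rw [coeff_Eop, key2 k Pv q (by omega)]
  rw [show k + (Pv + 1) - n = k - q from by omega, show n - k - 1 = Pv + q - k from by omega]
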